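/- With R = ℂ[t_1,…,t_n] and σ_1, …, σ_n the ℂ-algebra endomorphisms of R determined on generators by σ_i(t_j) = t_j for j < i, σ_i(t_i) = 1 + q_i t_i + Σ_{k=1}^{i−1}(q_k − 1)t_k, and σ_i(t_j) = q_i t_j for j > i: each σ_i is bijective (hence an automorphism of R), and the σ_i pairwise commute, i.e. σ_i ∘ σ_j = σ_j ∘ σ_i for all i, j. -/
import Mathlib


open MvPolynomial

/-- the `ℂ`-algebra endomorphisms `σ i` of `ℂ[t 1, …, t n]` determined by
`σ i (t j) = t j` for `j < i`, `σ i (t i) = 1 + q i t i + ∑_{k<i} (q k − 1) t k`,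
`σ i (t j) = q i t j` for `j > i`, are bijective and pairwise commute. -/
theorem stmt_5 (n : ℕ) (hn : 1 ≤ n) (q : Fin n → ℂ)
    (hq : ∀ i, q i ≠ 0 ∧ q i ≠ 1)
    (σ : Fin n → (MvPolynomial (Fin n) ℂ →ₐ[ℂ] MvPolynomial (Fin n) ℂ))
    (hσ : ∀ i j : Fin n, σ i (X j) =
      if j < i then X j
      else if j = i then
        1 + C (q i) * X i + ∑ k ∈ Finset.Iio i, C (q k - 1) * X k
      else C (q i) * X j) :
    (∀ i, Function.Bijective (σ i)) ∧
      (∀ i j : Fin n, (σ i).comp (σ j) = (σ j).comp (σ i)) := by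
  have hCmap : ∀ (i : Fin n) (c : ℂ), σ i (MvPolynomial.C c) = MvPolynomial.C c := by
    intro i c
    simpa [MvPolynomial.algebraMap_eq] using (σ i).commutes c
  set S : Fin n → MvPolynomial (Fin n) ℂ :=
    fun i => ∑ k ∈ Finset.Iio i, C (q k - 1) * X k with hSdef
  have hfix : ∀ i j : Fin n, i ≤ j → σ j (S i) = S i := by
    intro i j hij
    simp only [hSdef, map_sum, map_mul, hCmap]
    refine Finset.sum_congr rfl fun k hk => ?_
    have hk' : k < j := lt_of_lt_of_le (Finset.mem_Iio.mp hk) hij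
    rw [hσ, if_pos hk']
  have hlt : ∀ i m : Fin n, m < i → σ i (X m) = X m := by
    intro i m h; rw [hσ, if_pos h]
  have heq : ∀ i : Fin n, σ i (X i) = 1 + C (q i) * X i + S i := by
    intro i; rw [hσ, if_neg (lt_irrefl i), if_pos rfl]
  have hgt : ∀ i m : Fin n, i < m → σ i (X m) = C (q i) * X m := by
    intro i m h
    rw [hσ, if_neg (not_lt.mpr h.le), if_neg (ne_of_gt h)]
  have hSij : ∀ i j : Fin n, i < j → σ i (S j) = C (q i) * S j + C (q i) - 1 := by
    intro i j hij
    have step : ∀ k ∈ Finset.Iio j,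
        C (q k - 1) * σ i (X k)
          = C (q i) * (C (q k - 1) * X k)
            + ((if k < i then (1 - C (q i)) * (C (q k - 1) * X k) else 0)
              + (if k = i then (C (q i) - 1) * (1 + S i) else 0)) := by
      intro k _
      rcases lt_trichotomy k i with h | h | h
      · rw [hlt i k h, if_pos h, if_neg (ne_of_lt h)]; ring
      · subst h
        rw [heq, if_neg (lt_irrefl k), if_pos rfl]
        have hC1 : (C (q k - 1) : MvPolynomial (Fin n) ℂ) = C (q k) - 1 := by
          rw [map_sub, map_one]
        rw [hC1]; ring
      · rw [hgt i k h, if_neg (not_lt.mpr h.le), if_neg (ne_of_gt h)]; ring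
    have h1 : (∑ k ∈ Finset.Iio j,
        (if k < i then (1 - C (q i)) * (C (q k - 1) * X k) else 0))
          = (1 - C (q i)) * S i := by
      rw [← Finset.sum_subset (Finset.Iio_subset_Iio hij.le)
          (fun k _ hk => if_neg (by simpa using hk))]
      rw [hSdef, Finset.mul_sum]
      exact Finset.sum_congr rfl fun k hk => by rw [if_pos (Finset.mem_Iio.mp hk)]
    have h2 : (∑ k ∈ Finset.Iio j,
        (if k = i then (C (q i) - 1) * (1 + S i) else 0))
          = (C (q i) - 1) * (1 + S i) := by
      rw [Finset.sum_ite_eq' (Finset.Iio j) i fun _ => (C (q i) - 1) * (1 + S i)]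
      rw [if_pos (Finset.mem_Iio.mpr hij)]
    calc σ i (S j) = ∑ k ∈ Finset.Iio j, C (q k - 1) * σ i (X k) := by
            simp only [hSdef, map_sum, map_mul, hCmap]
      _ = C (q i) * S j + ((1 - C (q i)) * S i + (C (q i) - 1) * (1 + S i)) := by
            rw [Finset.sum_congr rfl step, Finset.sum_add_distrib,
              Finset.sum_add_distrib, h1, h2, ← Finset.mul_sum]
      _ = C (q i) * S j + C (q i) - 1 := by ring
  have key : ∀ i j : Fin n, i < j → ∀ m, σ i (σ j (X m)) = σ j (σ i (X m)) := by
    intro i j hij m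
    rcases lt_trichotomy m i with h | h | h
    · rw [hlt j m (h.trans hij), hlt i m h, hlt j m (h.trans hij)]
    · subst h
      rw [hlt j m hij, heq, map_add, map_add, map_one, map_mul, hCmap,
        hlt j m hij, hfix m j hij.le]
    · rcases lt_trichotomy m j with h' | h' | h'
      · rw [hlt j m h', hgt i m h, map_mul, hCmap, hlt j m h']
      · subst h'
        rw [heq, hgt i m h, map_add, map_add, map_one, map_mul, hCmap,
          hgt i m h, hSij i m h, map_mul, hCmap, heq]
        ring
      · rw [hgt j m h', map_mul, hCmap, hgt i m h, map_mul, hCmap, hgt j m h']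
        ring
  have comm : ∀ i j : Fin n, (σ i).comp (σ j) = (σ j).comp (σ i) := by
    intro i j
    rcases lt_trichotomy i j with h | h | h
    · exact MvPolynomial.algHom_ext fun m => key i j h m
    · subst h; rfl
    · exact MvPolynomial.algHom_ext fun m => (key j i h m).symm
  refine ⟨fun i => ?_, comm⟩
  set τ : MvPolynomial (Fin n) ℂ →ₐ[ℂ] MvPolynomial (Fin n) ℂ :=
    aeval (fun m => if m < i then X m
      else if m = i then C (q i)⁻¹ * (X i - 1 - S i) else C (q i)⁻¹ * X m) with hτ
  have hτX : ∀ m, τ (X m) = if m < i then X m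
      else if m = i then C (q i)⁻¹ * (X i - 1 - S i) else C (q i)⁻¹ * X m := by
    intro m; rw [hτ, aeval_X]
  have hτC : ∀ c : ℂ, τ (C c) = C c := by
    intro c; rw [hτ, aeval_C, MvPolynomial.algebraMap_eq]
  have hCinv : (C (q i)⁻¹ : MvPolynomial (Fin n) ℂ) * C (q i) = 1 := by
    rw [← map_mul, inv_mul_cancel₀ (hq i).1, map_one]
  have hτS : τ (S i) = S i := by
    simp only [hSdef, map_sum, map_mul, hτC]
    refine Finset.sum_congr rfl fun k hk => ?_
    rw [hτX, if_pos (Finset.mem_Iio.mp hk)]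
  have hl : ∀ p, τ (σ i p) = p := by
    have : τ.comp (σ i) = AlgHom.id ℂ (MvPolynomial (Fin n) ℂ) := by
      refine MvPolynomial.algHom_ext fun m => ?_
      show τ (σ i (X m)) = X m
      rcases lt_trichotomy m i with h | h | h
      · rw [hlt i m h, hτX, if_pos h]
      · subst h
        rw [heq, map_add, map_add, map_one, map_mul, hτC, hτX,
          if_neg (lt_irrefl m), if_pos rfl, hτS]
        rw [← mul_assoc, mul_comm (C (q m)) (C (q m)⁻¹), hCinv]
        ring
      · rw [hgt i m h, map_mul, hτC, hτX, if_neg (not_lt.mpr h.le),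
          if_neg (ne_of_gt h), ← mul_assoc, mul_comm (C (q i)) (C (q i)⁻¹), hCinv, one_mul]
    intro p; exact DFunLike.congr_fun this p
  have hr : ∀ p, σ i (τ p) = p := by
    have : (σ i).comp τ = AlgHom.id ℂ (MvPolynomial (Fin n) ℂ) := by
      refine MvPolynomial.algHom_ext fun m => ?_
      show σ i (τ (X m)) = X m
      rcases lt_trichotomy m i with h | h | h
      · rw [hτX, if_pos h, hlt i m h]
      · subst h
        rw [hτX, if_neg (lt_irrefl m), if_pos rfl, map_mul, hCmap, map_sub, map_sub,
          map_one, heq, hfix m m le_rfl]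
        have : (1 : MvPolynomial (Fin n) ℂ) + C (q m) * X m + S m - 1 - S m
            = C (q m) * X m := by ring
        rw [this, ← mul_assoc, hCinv, one_mul]
      · rw [hτX, if_neg (not_lt.mpr h.le), if_neg (ne_of_gt h), map_mul, hCmap,
          hgt i m h, ← mul_assoc, hCinv, one_mul]
    intro p; exact DFunLike.congr_fun this p
  exact ⟨fun a b hab => by rw [← hl a, hab, hl b],
    fun p => ⟨τ p, hr p⟩⟩
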